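/- Let k ≥ 2 and let α_1, ..., α_k ∈ ℂ be the distinct roots of Ψ_k(X) = X^k − X^{k−1} − ⋯ − X − 1. Then |∏_{i=1}^{k} ((k+1)α_i − 2k)| = (2^{k+1} k^k − (k+1)^{k+1})/(k − 1). -/

import Mathlib

open Polynomial Finset

lemma key_ineq (k : ℕ) (hk : 2 ≤ k) : 32 * (k+1)^(k+1) ≤ 27 * 2^(k+1) * k^k := by
  induction k, hk using Nat.le_induction with
  | base => norm_num
  | succ n hn ih =>
    have hpos : 0 < n ^ n := pow_pos (by omega) _
    refine Nat.le_of_mul_le_mul_right ?_ hpos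
    calc 32 * (n+1+1)^(n+1+1) * n^n
        = 32 * (n+2) * ((n+2)^(n+1) * n^n) := by ring
      _ ≤ 64 * n * ((n+2)^(n+1) * n^n) := by
          have : 32 * (n+2) ≤ 64 * n := by omega
          exact Nat.mul_le_mul_right _ this
      _ = 64 * (n * (n+2))^(n+1) := by rw [mul_pow]; ring
      _ ≤ 64 * ((n+1)^2)^(n+1) := by
          have : n * (n+2) ≤ (n+1)^2 := by nlinarith
          exact Nat.mul_le_mul_left _ (Nat.pow_le_pow_left this _)
      _ = 2 * (n+1)^(n+1) * (32 * (n+1)^(n+1)) := by rw [← pow_mul]; ring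
      _ ≤ 2 * (n+1)^(n+1) * (27 * 2^(n+1) * n^n) := Nat.mul_le_mul_left _ ih
      _ = 27 * 2^(n+1+1) * (n+1)^(n+1) * n^n := by ring

theorem abs_prod_linear_in_roots (k : ℕ) (hk : 2 ≤ k) (α : Fin k → ℂ)
    (hdist : Function.Injective α)
    (hroot : ∀ i, (α i) ^ k = ∑ j ∈ Finset.range k, (α i) ^ j) :
    ‖∏ i, (((k : ℂ) + 1) * α i - 2 * (k : ℂ))‖ =
      ((2 : ℝ) ^ (k + 1) * (k : ℝ) ^ k - ((k : ℝ) + 1) ^ (k + 1)) / ((k : ℝ) - 1) := by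
  have hk1 : (1 : ℝ) < (k : ℝ) := by exact_mod_cast (by omega : 1 < k)
  have hkC : ((k : ℂ) + 1) ≠ 0 := by
    intro h
    have h2 : (k : ℝ) + 1 = 0 := by exact_mod_cast congrArg Complex.re h
    linarith
  have hkC1 : ((k : ℂ) - 1) ≠ 0 := by
    intro h
    have h2 : (k : ℝ) - 1 = 0 := by exact_mod_cast congrArg Complex.re h
    linarith
  set P : Polynomial ℂ := X ^ k - ∑ j ∈ range k, X ^ j with hP
  set Q : Polynomial ℂ := ∏ i, (X - C (α i)) with hQ
  have hsum : (∑ j ∈ range k, (X : ℂ[X]) ^ j).degree < (k : WithBot ℕ) := by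
    apply lt_of_le_of_lt (degree_sum_le _ _)
    rw [Finset.sup_lt_iff (by exact_mod_cast WithBot.bot_lt_coe k)]
    intro j hj
    rw [degree_X_pow]
    exact_mod_cast mem_range.mp hj
  have hXk : ((X : ℂ[X]) ^ k).degree = (k : WithBot ℕ) := degree_X_pow k
  have hPdeg : P.degree = (k : WithBot ℕ) := by
    rw [hP, degree_sub_eq_left_of_degree_lt (by rw [hXk]; exact hsum), hXk]
  have hPmonic : P.Monic := monic_X_pow_sub hsum
  have hQmonic : Q.Monic := monic_prod_of_monic _ _ fun i _ => monic_X_sub_C _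
  have hQdeg : Q.degree = (k : WithBot ℕ) := by
    rw [hQ, degree_prod]
    simp [degree_X_sub_C]
  have hPQ : P = Q := by
    by_contra hne
    have hD : P - Q ≠ 0 := sub_ne_zero.mpr hne
    have hdeg : (P - Q).degree < (k : WithBot ℕ) := by
      rw [← hPdeg]
      exact degree_sub_lt (hPdeg.trans hQdeg.symm) hPmonic.ne_zero
        (hPmonic.leadingCoeff.trans hQmonic.leadingCoeff.symm)
    have hnd : (P - Q).natDegree < k := natDegree_lt_iff_degree_lt hD |>.mpr hdeg
    have := Polynomial.eq_zero_of_natDegree_lt_card_of_eval_eq_zero (P - Q) hdist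
      (fun i => by
        simp only [eval_sub, hP, hQ, eval_pow, eval_X, eval_finset_sum, eval_prod, eval_C]
        rw [hroot i]
        simp [Finset.prod_eq_zero (Finset.mem_univ i)])
      (by simpa using hnd)
    exact hD this
  -- evaluate at x0 = 2k/(k+1)
  set x0 : ℂ := 2 * (k : ℂ) / ((k : ℂ) + 1) with hx0
  have hx0ne1 : x0 - 1 ≠ 0 := by
    rw [hx0]
    intro h
    rw [div_sub_one hkC] at h
    have := div_eq_zero_iff.mp h
    rcases this with h' | h'
    · have : (k : ℂ) = 1 := by linear_combination h'
      exact hkC1 (by rw [this]; ring)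
    · exact hkC h'
  have hx0ne1' : x0 ≠ 1 := fun h => hx0ne1 (by rw [h]; ring)
  have heval : P.eval x0 = Q.eval x0 := by rw [hPQ]
  have hQe : Q.eval x0 = ∏ i, (x0 - α i) := by
    rw [hQ, eval_prod]; simp
  have hPe : P.eval x0 = x0 ^ k - (x0 ^ k - 1) / (x0 - 1) := by
    rw [hP]
    simp only [eval_sub, eval_pow, eval_X, eval_finset_sum]
    rw [geom_sum_eq hx0ne1']
  -- rewrite the product
  have hfac : ∀ i : Fin k, ((k : ℂ) + 1) * α i - 2 * (k : ℂ) = (-((k : ℂ) + 1)) * (x0 - α i) := by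
    intro i
    rw [hx0]
    field_simp
    ring
  have hprod : ∏ i, (((k : ℂ) + 1) * α i - 2 * (k : ℂ)) = (-((k : ℂ) + 1)) ^ k * ∏ i, (x0 - α i) :=
    calc ∏ i, (((k : ℂ) + 1) * α i - 2 * (k : ℂ)) = ∏ i : Fin k, (-((k : ℂ) + 1)) * (x0 - α i) :=
          Finset.prod_congr rfl fun i _ => hfac i
      _ = (-((k : ℂ) + 1)) ^ k * ∏ i, (x0 - α i) := by
          rw [Finset.prod_mul_distrib, Finset.prod_const, Finset.card_univ, Fintype.card_fin]
  have hval : ∏ i, (((k : ℂ) + 1) * α i - 2 * (k : ℂ)) =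
      (-1) ^ k * ((((k : ℂ) + 1) ^ (k + 1) - 2 ^ (k + 1) * (k : ℂ) ^ k) / ((k : ℂ) - 1)) := by
    rw [hprod, ← hQe, ← heval, hPe, hx0]
    have h2 : ((2 * (k : ℂ) / ((k : ℂ) + 1)) ^ k) = (2 * (k : ℂ)) ^ k / ((k : ℂ) + 1) ^ k :=
      div_pow _ _ _
    have hpne : ((k : ℂ) + 1) ^ k ≠ 0 := pow_ne_zero _ hkC
    rw [h2]
    have hd : 2 * (k : ℂ) / ((k : ℂ) + 1) - 1 = ((k : ℂ) - 1) / ((k : ℂ) + 1) := by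
      field_simp
      ring
    rw [hd, neg_pow]
    field_simp
    ring
  rw [hval]
  rw [norm_mul, norm_div]
  have habs1 : ‖(-1 : ℂ) ^ k‖ = 1 := by
    rw [norm_pow]; simp
  rw [habs1, one_mul]
  have hnum : (((k : ℂ) + 1) ^ (k + 1) - 2 ^ (k + 1) * (k : ℂ) ^ k) =
      (((((k : ℝ) + 1) ^ (k + 1) - 2 ^ (k + 1) * (k : ℝ) ^ k) : ℝ) : ℂ) := by
    push_cast; ring
  have hden : ((k : ℂ) - 1) = ((((k : ℝ) - 1) : ℝ) : ℂ) := by push_cast; ring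
  rw [hnum, hden, Complex.norm_real, Complex.norm_real, Real.norm_eq_abs, Real.norm_eq_abs]
  have hineq : ((k : ℝ) + 1) ^ (k + 1) ≤ 2 ^ (k + 1) * (k : ℝ) ^ k := by
    have h := key_ineq k hk
    have h2 : (k + 1 : ℕ) ^ (k + 1) ≤ 2 ^ (k + 1) * k ^ k := by
      have h3 : 27 * 2 ^ (k+1) * k ^ k ≤ 32 * (2 ^ (k+1) * k ^ k) := by
        rw [mul_assoc]
        exact Nat.mul_le_mul_right _ (by norm_num)
      exact Nat.le_of_mul_le_mul_left (le_trans h h3) (by norm_num)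
    have := (Nat.cast_le (α := ℝ)).mpr h2
    push_cast at this
    linarith
  rw [abs_of_nonpos (by linarith), abs_of_pos (by linarith)]
  ring
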